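/- Let k > 0 and M > 3, and let δ > 0 satisfy M·δ < k. Let z = a + ib ∈ ℂ with |b| < δ and |a| < k − (M−1)·δ. Then |k² − z²| ≥ (|a| + k)·(M−1)·δ and Re(k² − z²) > 0. -/

import Mathlib

/-- Case (1) of the PML decay lemma. -/
theorem stmt_1 (k M δ : ℝ) (z : ℂ) (hk : 0 < k) (hM : 3 < M) (hδ : 0 < δ)
    (hMδ : M * δ < k) (hb : |z.im| < δ) (ha : |z.re| < k - (M - 1) * δ) :
    (|z.re| + k) * (M - 1) * δ ≤ ‖(k : ℂ) ^ 2 - z ^ 2‖ ∧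
      0 < (((k : ℂ) ^ 2 - z ^ 2)).re := by
  set a := z.re
  set b := z.im
  have hre : (((k : ℂ) ^ 2 - z ^ 2)).re = k ^ 2 - a ^ 2 + b ^ 2 := by
    simp [Complex.sub_re, Complex.ext_iff, pow_two, Complex.mul_re]
    ring
  have ha2 : a ^ 2 ≤ |a| ^ 2 := by rw [sq_abs]
  have hak : |a| < k := by nlinarith [abs_nonneg a]
  have hpos : 0 < k ^ 2 - a ^ 2 + b ^ 2 := by
    nlinarith [sq_abs a, sq_nonneg b, abs_nonneg a]
  refine ⟨?_, by rw [hre]; exact hpos⟩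
  have hle : (|a| + k) * (M - 1) * δ ≤ k ^ 2 - a ^ 2 + b ^ 2 := by
    nlinarith [sq_abs a, sq_nonneg b, abs_nonneg a]
  calc (|a| + k) * (M - 1) * δ ≤ k ^ 2 - a ^ 2 + b ^ 2 := hle
    _ = (((k : ℂ) ^ 2 - z ^ 2)).re := hre.symm
    _ ≤ |(((k : ℂ) ^ 2 - z ^ 2)).re| := le_abs_self _
    _ ≤ ‖(k : ℂ) ^ 2 - z ^ 2‖ := Complex.abs_re_le_norm _
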